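/- For 1 ≤ i < j ≤ n let α_{i,j} := ξ(A_{i,j}) ∈ Aut(F_n). Then |α_{i,j}| = id_H, and τ₁(α_{i,j})(X_i) = X_i ⊗ X_j − X_j ⊗ X_i, τ₁(α_{i,j})(X_j) = −(X_i ⊗ X_j − X_j ⊗ X_i), and τ₁(α_{i,j})(X_k) = 0 for k ∉ {i, j}. Equivalently, τ₁(α_{i,j}) = (l_i − l_j) ⊗ (X_i ⊗ X_j − X_j ⊗ X_i), where l_i, l_j are coordinate functionals on H. -/

import Mathlib

noncomputable section
open scoped TensorProduct


/-- `H = Fin n →₀ ℤ`, the first integral homology of the free group. -/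
abbrev Hz (n : ℕ) : Type := Fin n →₀ ℤ

/-- The standard basis vector `X i`. -/
def Xz (n : ℕ) (i : Fin n) : Hz n := Finsupp.single i 1

/-- `H ⊗ℤ H`. -/
abbrev HHz (n : ℕ) : Type := Hz n ⊗[ℤ] Hz n

/-- The degree ≤ 2 truncation of the Magnus algebra: underlying set `H × (H ⊗ H)`,
with multiplication `(u,s)·(u',s') = (u+u', s+s'+u⊗u')`. -/
def Mn (n : ℕ) : Type := Hz n × HHz n

namespace Mn

variable {n : ℕ}

instance : Group (Mn n) where
  mul a b := (a.1 + b.1, a.2 + b.2 + a.1 ⊗ₜ[ℤ] b.1)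
  one := ((0 : Hz n), (0 : HHz n))
  inv a := (-a.1, -a.2 + a.1 ⊗ₜ[ℤ] a.1)
  mul_assoc a b c := by
    show (_, _) = (_, _)
    refine Prod.ext (add_assoc _ _ _) ?_
    show a.2 + b.2 + a.1 ⊗ₜ[ℤ] b.1 + c.2 + (a.1 + b.1) ⊗ₜ[ℤ] c.1
        = a.2 + (b.2 + c.2 + b.1 ⊗ₜ[ℤ] c.1) + a.1 ⊗ₜ[ℤ] (b.1 + c.1)
    rw [TensorProduct.add_tmul, TensorProduct.tmul_add]
    abel
  one_mul a := by
    show ((0 : Hz n) + a.1, (0 : HHz n) + a.2 + (0 : Hz n) ⊗ₜ[ℤ] a.1) = a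
    rw [TensorProduct.zero_tmul]
    simp
    rfl
  mul_one a := by
    show (a.1 + 0, a.2 + (0:HHz n) + a.1 ⊗ₜ[ℤ] (0 : Hz n)) = a
    rw [TensorProduct.tmul_zero]
    simp
    rfl
  inv_mul_cancel a := by
    show (-a.1 + a.1, (-a.2 + a.1 ⊗ₜ[ℤ] a.1) + a.2 + (-a.1) ⊗ₜ[ℤ] a.1) = ((0:Hz n), (0:HHz n))
    rw [TensorProduct.neg_tmul]
    refine Prod.ext (by simp) ?_
    show _ = (0 : HHz n)
    abel

end Mn

/-- The truncated standard Magnus expansion `Θ : F_n →* M_n`, `x_i ↦ (X_i, 0)`. -/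
def Theta (n : ℕ) : FreeGroup (Fin n) →* Mn n :=
  FreeGroup.lift fun i => ((Xz n i, 0) : Mn n)

/-- The abelianization map `a : F_n → H`, the first component of `Θ`. -/
def aMap (n : ℕ) (γ : FreeGroup (Fin n)) : Hz n := (Theta n γ).1

/-- `θ₂`, the second component of the truncated Magnus expansion. -/
def theta2 (n : ℕ) (γ : FreeGroup (Fin n)) : HHz n := (Theta n γ).2

/-- The braid relations on `m` generators `σ_0, …, σ_{m-1}` (0-based):
`σ i` and `σ j` commute for `i + 2 ≤ j`, and `σ i σ (i+1) σ i = σ (i+1) σ i σ (i+1)`. -/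
def braidRels (m : ℕ) : Set (FreeGroup (Fin m)) :=
  {r | (∃ i j : Fin m, (i : ℕ) + 2 ≤ (j : ℕ) ∧
          r = .of i * .of j * (.of i)⁻¹ * (.of j)⁻¹) ∨
       (∃ i j : Fin m, (i : ℕ) + 1 = (j : ℕ) ∧
          r = .of i * .of j * .of i * (.of j * .of i * .of j)⁻¹)}

/-- The braid group on `m+1` strings, presented with `m` generators. `B_n = Braid (n-1)`. -/
abbrev Braid (m : ℕ) : Type := PresentedGroup (braidRels m)

/-- The generator `σ_i` (0-based) of the braid group. -/
def sigma {m : ℕ} (i : Fin m) : Braid m := PresentedGroup.of i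

/-- The generator `σ_k` of the braid group indexed by a natural number `k`
(defined to be `1` out of range). -/
def sg (m : ℕ) (k : ℕ) : Braid m :=
  if h : k < m then sigma ⟨k, h⟩ else 1

/-- The pure braid generator `A_{i,j}` (`0`-based indices `i < j`):
`Ael m i j = σ_{j-1} ⋯ σ_{i+1} σ_i² σ_{i+1}⁻¹ ⋯ σ_{j-1}⁻¹` in `Braid m`. -/
def Ael (m : ℕ) (i : ℕ) : ℕ → Braid m
  | 0 => 1
  | (j + 1) =>
    if j = i then sg m i * sg m i
    else sg m j * Ael m i j * (sg m j)⁻¹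


section Aux
variable {n : ℕ}
lemma Mn.mul_fst (a b : Mn n) : (a*b).1 = a.1 + b.1 := rfl
lemma Mn.mul_snd (a b : Mn n) : (a*b).2 = a.2 + b.2 + a.1 ⊗ₜ[ℤ] b.1 := rfl
lemma Mn.inv_fst (a : Mn n) : (a⁻¹).1 = -a.1 := rfl
lemma Mn.inv_snd (a : Mn n) : (a⁻¹).2 = -a.2 + a.1 ⊗ₜ[ℤ] a.1 := rfl
lemma Theta_of (k : Fin n) : Theta n (FreeGroup.of k) = ((Xz n k, 0) : Mn n) := FreeGroup.lift_apply_of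
lemma aMap_of (k : Fin n) : aMap n (FreeGroup.of k) = Xz n k := by rw [aMap, Theta_of]
lemma theta2_of (k : Fin n) : theta2 n (FreeGroup.of k) = 0 := by rw [theta2, Theta_of]
lemma aMap_mul (g h : FreeGroup (Fin n)) : aMap n (g*h) = aMap n g + aMap n h := by
  rw [aMap, map_mul]; rfl
lemma aMap_inv (g : FreeGroup (Fin n)) : aMap n g⁻¹ = - aMap n g := by
  rw [aMap, map_inv]; rfl
lemma aMap_one : aMap n 1 = 0 := by rw [aMap, map_one]; rfl
lemma aMap_conj (w g : FreeGroup (Fin n)) : aMap n (w * g * w⁻¹) = aMap n g := by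
  rw [aMap_mul, aMap_mul, aMap_inv]; abel
lemma theta2_conj (w g : FreeGroup (Fin n)) :
    theta2 n (w * g * w⁻¹) = theta2 n g + aMap n w ⊗ₜ[ℤ] aMap n g - aMap n g ⊗ₜ[ℤ] aMap n w := by
  unfold theta2 aMap
  rw [map_mul, map_mul, map_inv]
  rw [Mn.mul_snd, Mn.mul_snd, Mn.inv_snd, Mn.mul_fst, Mn.inv_fst,
    TensorProduct.add_tmul, TensorProduct.tmul_neg, TensorProduct.tmul_neg]
  abel
end Aux

theorem stmt8 (n : ℕ) (hn : 2 ≤ n)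
    (β : Fin (n-1) → MulAut (FreeGroup (Fin n)))
    (hβ : ∀ (i : Fin (n-1)) (h1 : (i : ℕ) < n) (h2 : (i : ℕ) + 1 < n),
      β i (FreeGroup.of ⟨i, h1⟩) = FreeGroup.of ⟨(i : ℕ) + 1, h2⟩ ∧
      β i (FreeGroup.of ⟨(i : ℕ) + 1, h2⟩) =
        (FreeGroup.of (⟨(i : ℕ) + 1, h2⟩ : Fin n))⁻¹ * FreeGroup.of ⟨i, h1⟩ *
          FreeGroup.of ⟨(i : ℕ) + 1, h2⟩ ∧
      ∀ j : Fin n, (j : ℕ) ≠ (i : ℕ) → (j : ℕ) ≠ (i : ℕ) + 1 →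
        β i (FreeGroup.of j) = FreeGroup.of j)
    (ξ : Braid (n-1) →* MulAut (FreeGroup (Fin n)))
    (hξ : ∀ i : Fin (n-1), ξ (sigma i) = β i)
    (Φ : MulAut (FreeGroup (Fin n)) → (Hz n →+ Hz n))
    (hΦ : ∀ (φ : MulAut (FreeGroup (Fin n))) (γ : FreeGroup (Fin n)),
      Φ φ (aMap n γ) = aMap n (φ γ))
    (τ : MulAut (FreeGroup (Fin n)) → (Hz n →+ HHz n))
    (hτ : ∀ (φ : MulAut (FreeGroup (Fin n))) (γ : FreeGroup (Fin n)),
      τ φ (aMap n γ) = theta2 n γ -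
        (TensorProduct.map (Φ φ).toIntLinearMap (Φ φ).toIntLinearMap)
          (theta2 n (φ⁻¹ γ)))
 :
    ∀ i j : Fin n, i < j →
      (Φ (ξ (Ael (n-1) i j)) = AddMonoidHom.id (Hz n)) ∧
      τ (ξ (Ael (n-1) i j)) (Xz n i) =
        Xz n i ⊗ₜ[ℤ] Xz n j - Xz n j ⊗ₜ[ℤ] Xz n i ∧
      τ (ξ (Ael (n-1) i j)) (Xz n j) =
        -(Xz n i ⊗ₜ[ℤ] Xz n j - Xz n j ⊗ₜ[ℤ] Xz n i) ∧
      ∀ k : Fin n, k ≠ i → k ≠ j → τ (ξ (Ael (n-1) i j)) (Xz n k) = 0 := by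
  -- the key action lemma
  have key : ∀ (i j : ℕ) (hij : i < j) (hj : j < n) (k : Fin n),
      ∃ w : FreeGroup (Fin n),
        ξ (Ael (n-1) i j) (FreeGroup.of k) = w * FreeGroup.of k * w⁻¹ ∧
        aMap n w = (if (k:ℕ) = i then -Xz n ⟨j, hj⟩
          else if (k:ℕ) = j then -Xz n ⟨i, lt_trans hij hj⟩ - Xz n ⟨j, hj⟩ else 0) := by
    intro i j
    induction j with
    | zero => intro h; omega
    | succ j ih =>
      intro hij hj k
      have hjn : j < n := by omega
      rcases Nat.lt_or_ge i j with hij' | hge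
      · -- step case: i < j, Ael i (j+1) = σ_j ∘ Ael i j ∘ σ_j⁻¹
        have hjm : j < n - 1 := by omega
        have hEq : Ael (n-1) i (j+1) = sg (n-1) j * Ael (n-1) i j * (sg (n-1) j)⁻¹ := by
          rw [Ael, if_neg (by omega)]
        rw [hEq, map_mul, map_mul, map_inv]
        rw [sg, dif_pos hjm, hξ]
        set b := β ⟨j, hjm⟩ with hbdef
        obtain ⟨hb1, hb2, hb3⟩ := hβ ⟨j, hjm⟩ (by simpa using hjn) (by simpa using hj)
        simp only [MulAut.mul_apply]
        -- Φ b on basis vectors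
        have hΦb : ∀ (l : Fin n) (h1 : (l:ℕ) ≠ j) (h2 : (l:ℕ) ≠ j+1),
            Φ b (Xz n l) = Xz n l := by
          intro l h1 h2
          rw [← aMap_of, hΦ, hb3 l h1 h2, aMap_of]
        have hΦbj : Φ b (Xz n ⟨j, hjn⟩) = Xz n ⟨j+1, hj⟩ := by
          rw [← aMap_of, hΦ, hb1, aMap_of]
        by_cases hkj : (k:ℕ) = j
        · -- k = j
          have hk : k = ⟨j, hjn⟩ := Fin.ext hkj
          subst hk
          have hbinv : b⁻¹ (FreeGroup.of ⟨j, hjn⟩) =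
              FreeGroup.of ⟨j, hjn⟩ * FreeGroup.of ⟨j+1, hj⟩ * (FreeGroup.of (⟨j, hjn⟩ : Fin n))⁻¹ := by
            rw [MulAut.inv_def, MulEquiv.symm_apply_eq, map_mul, map_mul, map_inv, hb1, hb2]
            group
          rw [hbinv]
          obtain ⟨w1, hw1e, hw1a⟩ := ih hij' hjn ⟨j, hjn⟩
          obtain ⟨w2, hw2e, hw2a⟩ := ih hij' hjn ⟨j+1, hj⟩
          simp only [Fin.val_mk] at hw1a hw2a
          rw [if_neg (by omega), if_pos trivial] at hw1a
          rw [if_neg (by omega), if_neg (by omega)] at hw2a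
          set W := w1 * FreeGroup.of ⟨j, hjn⟩ * w1⁻¹ * w2 with hWdef
          have haW : aMap n W = Xz n ⟨j, hjn⟩ := by
            rw [hWdef, aMap_mul, aMap_mul, aMap_mul, aMap_inv, aMap_of, hw2a]; abel
          have hA : (ξ (Ael (n-1) i j)) (FreeGroup.of ⟨j, hjn⟩ * FreeGroup.of ⟨j+1, hj⟩ *
              (FreeGroup.of (⟨j, hjn⟩ : Fin n))⁻¹) = W * FreeGroup.of ⟨j+1, hj⟩ * W⁻¹ := by
            rw [map_mul, map_mul, map_inv, hw1e, hw2e, hWdef]; group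
          refine ⟨b W * (FreeGroup.of (⟨j+1, hj⟩ : Fin n))⁻¹, ?_, ?_⟩
          · rw [hA, map_mul, map_mul, map_inv, hb2]
            group
          · rw [aMap_mul, aMap_inv, aMap_of, ← hΦ, haW, hΦbj,
              if_neg (by omega), if_neg (by omega)]
            abel
        · by_cases hkj1 : (k:ℕ) = j+1
          · -- k = j+1
            have hk : k = ⟨j+1, hj⟩ := Fin.ext hkj1
            subst hk
            have hbinv : b⁻¹ (FreeGroup.of ⟨j+1, hj⟩) = FreeGroup.of ⟨j, hjn⟩ := by
              rw [MulAut.inv_def, MulEquiv.symm_apply_eq, hb1]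
            rw [hbinv]
            obtain ⟨w1, hw1e, hw1a⟩ := ih hij' hjn ⟨j, hjn⟩
            simp only [Fin.val_mk] at hw1a
            rw [if_neg (by omega), if_pos trivial] at hw1a
            refine ⟨b w1, ?_, ?_⟩
            · rw [hw1e, map_mul, map_mul, map_inv, hb1]
            · rw [← hΦ, hw1a, map_sub, map_neg, hΦbj,
                hΦb ⟨i, by omega⟩ (by simp; omega) (by simp; omega),
                if_neg (show ¬ ((⟨j+1, hj⟩ : Fin n):ℕ) = i by simp; omega),
                if_pos (rfl : ((⟨j+1, hj⟩ : Fin n):ℕ) = j+1)]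
          · -- k ∉ {j, j+1}
            have hbinv : b⁻¹ (FreeGroup.of k) = FreeGroup.of k := by
              rw [MulAut.inv_def, MulEquiv.symm_apply_eq, hb3 k (by simpa using hkj) (by simpa using hkj1)]
            rw [hbinv]
            obtain ⟨w, hwe, hwa⟩ := ih hij' hjn k
            refine ⟨b w, ?_, ?_⟩
            · rw [hwe, map_mul, map_mul, map_inv, hb3 k (by simpa using hkj) (by simpa using hkj1)]
            · rw [← hΦ, hwa]
              by_cases hki : (k:ℕ) = i
              · rw [if_pos hki, if_pos hki, map_neg, hΦbj]
              · rw [if_neg hki, if_neg hkj, if_neg hki, if_neg hkj1, map_zero]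
      · -- base case: j = i
        have hji : j = i := by omega
        subst hji
        have hjm : j < n - 1 := by omega
        have hEq : Ael (n-1) j (j+1) = sg (n-1) j * sg (n-1) j := by
          rw [Ael, if_pos rfl]
        rw [hEq, map_mul, sg, dif_pos hjm, hξ]
        obtain ⟨hb1, hb2, hb3⟩ := hβ ⟨j, hjm⟩ (by simpa using hjn) (by simpa using hj)
        simp only [MulAut.mul_apply]
        by_cases hkj : (k:ℕ) = j
        · have hk : k = ⟨j, hjn⟩ := Fin.ext hkj
          subst hk
          refine ⟨(FreeGroup.of (⟨j+1, hj⟩ : Fin n))⁻¹, ?_, ?_⟩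
          · rw [hb1, hb2]; group
          · rw [aMap_inv, aMap_of, if_pos (by simp)]
        · by_cases hkj1 : (k:ℕ) = j+1
          · have hk : k = ⟨j+1, hj⟩ := Fin.ext hkj1
            subst hk
            refine ⟨(FreeGroup.of (⟨j, hjn⟩ : Fin n) * FreeGroup.of (⟨j+1, hj⟩ : Fin n))⁻¹, ?_, ?_⟩
            · rw [hb2, map_mul, map_mul, map_inv, hb1, hb2]; group
            · rw [aMap_inv, aMap_mul, aMap_of, aMap_of,
                if_neg (by simp), if_pos (by simp)]
              abel
          · refine ⟨1, ?_, ?_⟩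
            · rw [hb3 k (by simpa using hkj) (by simpa using hkj1),
                hb3 k (by simpa using hkj) (by simpa using hkj1)]
              group
            · rw [aMap_one, if_neg hkj, if_neg hkj1]
  -- now the main statement
  intro i j hij
  have hij' : (i:ℕ) < (j:ℕ) := hij
  have hjn : (j:ℕ) < n := j.isLt
  set α := ξ (Ael (n-1) ↑i ↑j) with hα
  have hXi : (⟨(i:ℕ), lt_trans hij' hjn⟩ : Fin n) = i := Fin.ext rfl
  have hXj : (⟨(j:ℕ), hjn⟩ : Fin n) = j := Fin.ext rfl
  -- τ on basis vectors
  have hτk : ∀ k : Fin n, ∃ w, τ α (Xz n k) = aMap n w ⊗ₜ[ℤ] Xz n k - Xz n k ⊗ₜ[ℤ] aMap n w ∧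
      aMap n w = (if (k:ℕ) = (i:ℕ) then -Xz n j
        else if (k:ℕ) = (j:ℕ) then -Xz n i - Xz n j else 0) := by
    intro k
    obtain ⟨w, hwe, hwa⟩ := key ↑i ↑j hij' hjn k
    rw [hXi, hXj] at hwa
    refine ⟨w, ?_, hwa⟩
    have h1 : aMap n (α (FreeGroup.of k)) = Xz n k := by
      rw [hwe, aMap_conj, aMap_of]
    have h2 := hτ α (α (FreeGroup.of k))
    rw [h1, MulAut.inv_def, MulEquiv.symm_apply_apply, theta2_of, map_zero, sub_zero,
      hwe, theta2_conj, theta2_of, aMap_of, zero_add] at h2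
    exact h2
  -- Φ = id
  have hΦk : ∀ k : Fin n, Φ α (Xz n k) = Xz n k := by
    intro k
    obtain ⟨w, hwe, -⟩ := key ↑i ↑j hij' hjn k
    rw [← aMap_of, hΦ, hwe, aMap_conj, aMap_of]
  refine ⟨?_, ?_, ?_, ?_⟩
  · refine Finsupp.addHom_ext fun k b => ?_
    have : (Finsupp.single k b : Hz n) = b • Xz n k := by
      rw [Xz, Finsupp.smul_single, smul_eq_mul, mul_one]
    rw [this, AddMonoidHom.map_zsmul, hΦk, AddMonoidHom.id_apply]
  · obtain ⟨w, he, ha⟩ := hτk i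
    rw [he, ha, if_pos rfl]
    rw [TensorProduct.neg_tmul, TensorProduct.tmul_neg]
    abel
  · obtain ⟨w, he, ha⟩ := hτk j
    rw [he, ha, if_neg (by omega), if_pos rfl]
    rw [TensorProduct.sub_tmul, TensorProduct.neg_tmul, TensorProduct.tmul_sub, TensorProduct.tmul_neg]
    abel
  · intro k hki hkj
    obtain ⟨w, he, ha⟩ := hτk k
    rw [he, ha, if_neg (by exact fun h => hki (Fin.ext h)), if_neg (by exact fun h => hkj (Fin.ext h))]
    rw [TensorProduct.zero_tmul, TensorProduct.tmul_zero, sub_zero]
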